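/- arXiv:2506.09415 — 2 statements merged into one kernel-verified Lean document; each statement's English description precedes it below -/
import Mathlib

section
/- The four antiparallel double-SIC vectors γ_1, γ_2, γ_3, γ_4 are linearly independent, hence form a basis of ℂ²⊗ℂ² ≅ ℂ⁴. (This is the content of the first part of Proposition 4: the ensemble S^{↑↓} admits conclusive global discrimination, and it trivially forms an unextendible product basis since it spans the full two-qubit space.) -/
/-!
Statement 7: The four antiparallel double-SIC vectors γ_i = s_i ⊗ s_i^⊥ are linearly
independent and hence form a basis of ℂ²⊗ℂ² ≅ ℂ⁴ (so the ensemble S^{↑↓} admits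
conclusive global discrimination).
-/

noncomputable section
open scoped ComplexInnerProductSpace

/-- The qubit Hilbert space `ℂ²`. -/
abbrev Qubit : Type := EuclideanSpace ℂ (Fin 2)

/-- The (Kronecker) tensor product of two vectors, realized in `EuclideanSpace ℂ (ι × κ)`. -/
def tp {ι κ : Type} (x : EuclideanSpace ℂ ι) (y : EuclideanSpace ℂ κ) :
    EuclideanSpace ℂ (ι × κ) :=
  (WithLp.equiv 2 (ι × κ → ℂ)).symm (fun p => x p.1 * y p.2)

/-- A qubit vector from its two coordinates. -/
def mk2 (a b : ℂ) : Qubit := (WithLp.equiv 2 (Fin 2 → ℂ)).symm ![a, b]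

/-- The cube root of unity phases `ζ k = exp(2πik/3)`. -/
def ζ (k : ℤ) : ℂ := Complex.exp (2 * (Real.pi : ℂ) * Complex.I * (k : ℂ) / 3)

/-- `1/√3` in `ℂ`. -/
def r3 : ℂ := ((Real.sqrt 3 : ℂ))⁻¹

/-- `√2` in `ℂ`. -/
def r2 : ℂ := (Real.sqrt 2 : ℂ)

/-- The qubit SIC states: `s 0 = |0⟩` and
`s j = (1/√3)(|0⟩ + √2 e^{2πi(j-1)/3} |1⟩)` for `j = 1, 2, 3`
(indexing the paper's `s_1, …, s_4` by `Fin 4`). -/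
def s : Fin 4 → Qubit :=
  ![mk2 1 0,
    mk2 r3 (r3 * r2 * ζ 0),
    mk2 r3 (r3 * r2 * ζ 1),
    mk2 r3 (r3 * r2 * ζ 2)]

/-- The orthogonal SIC states: `sperp 0 = |1⟩` and
`sperp j = (1/√3)(√2 e^{-2πi(j-1)/3} |0⟩ - |1⟩)` for `j = 1, 2, 3`. -/
def sperp : Fin 4 → Qubit :=
  ![mk2 0 1,
    mk2 (r3 * r2 * ζ 0) (-r3),
    mk2 (r3 * r2 * ζ (-1)) (-r3),
    mk2 (r3 * r2 * ζ (-2)) (-r3)]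

/-- The antiparallel double-SIC vectors `γ_i = s_i ⊗ s_i^⊥`. -/
def γ (i : Fin 4) : EuclideanSpace ℂ (Fin 2 × Fin 2) := tp (s i) (sperp i)

lemma r3_ne : r3 ≠ 0 := by
  simp only [r3, ne_eq, inv_eq_zero, Complex.ofReal_eq_zero]
  positivity

lemma r2_ne : r2 ≠ 0 := by
  simp only [r2, ne_eq, Complex.ofReal_eq_zero]
  positivity

lemma hζ0 : ζ 0 = 1 := by
  simp [ζ]

lemma hζadd (a b : ℤ) : ζ (a + b) = ζ a * ζ b := by
  rw [ζ, ζ, ζ, ← Complex.exp_add]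
  congr 1
  push_cast
  ring

lemma hζ3 : ζ 3 = 1 := by
  have h : 2 * (Real.pi : ℂ) * Complex.I * ((3:ℤ) : ℂ) / 3 = 2 * (Real.pi : ℂ) * Complex.I := by
    push_cast; ring
  rw [ζ, h, Complex.exp_two_pi_mul_I]

lemma hζm3 : ζ (-3) = 1 := by
  have h := hζadd 3 (-3)
  rw [show (3 + -3 : ℤ) = 0 by ring, hζ0, hζ3, one_mul] at h
  exact h.symm

lemma hζ2 : ζ 2 = ζ 1 ^ 2 := by
  have h := hζadd 1 1
  rw [show (1 + 1 : ℤ) = 2 by ring] at h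
  rw [h]; ring

lemma hζm1 : ζ (-1) = ζ 1 ^ 2 := by
  have h := hζadd 2 (-3)
  rw [show (2 + -3 : ℤ) = -1 by ring, hζm3, mul_one] at h
  rw [h, hζ2]

lemma hζm2 : ζ (-2) = ζ 1 := by
  have h := hζadd 1 (-3)
  rw [show (1 + -3 : ℤ) = -2 by ring, hζm3, mul_one] at h
  exact h

lemma hzeta1 : ζ 1 = (-1 + (Real.sqrt 3 : ℂ) * Complex.I) / 2 := by
  have h1 : (2 * (Real.pi : ℂ) * Complex.I * ((1:ℤ) : ℂ) / 3)
      = ((2 * Real.pi / 3 : ℝ) : ℂ) * Complex.I := by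
    push_cast; ring
  have hc : Real.cos (2 * Real.pi / 3) = -(1/2) := by
    have h : 2 * Real.pi / 3 = Real.pi - Real.pi / 3 := by ring
    rw [h, Real.cos_pi_sub, Real.cos_pi_div_three]
  have hs : Real.sin (2 * Real.pi / 3) = Real.sqrt 3 / 2 := by
    have h : 2 * Real.pi / 3 = Real.pi - Real.pi / 3 := by ring
    rw [h, Real.sin_pi_sub, Real.sin_pi_div_three]
  rw [ζ, h1, Complex.exp_mul_I, ← Complex.ofReal_cos, ← Complex.ofReal_sin, hc, hs]
  push_cast
  ring

lemma hsum : 1 + ζ 1 + ζ 1 ^ 2 = 0 := by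
  rw [hzeta1]
  have h3 : ((Real.sqrt 3 : ℂ)) ^ 2 = 3 := by
    rw [← Complex.ofReal_pow, Real.sq_sqrt (by norm_num : (3:ℝ) ≥ 0)]
    norm_num
  linear_combination (Complex.I ^ 2 / 4) * h3 + (3 / 4) * Complex.I_sq

lemma r3sq : r3 ^ 2 = 1 / 3 := by
  rw [r3, inv_pow, ← Complex.ofReal_pow, Real.sq_sqrt (by norm_num : (3:ℝ) ≥ 0)]
  norm_num

lemma r2sq : r2 ^ 2 = 2 := by
  rw [r2, ← Complex.ofReal_pow, Real.sq_sqrt (by norm_num : (2:ℝ) ≥ 0)]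
  norm_num

/-- The antiparallel double-SIC vectors are linearly independent, hence span all of
`ℂ²⊗ℂ² ≅ ℂ⁴`, i.e. they form a basis. -/
theorem antiparallel_double_SIC_linearly_independent :
    LinearIndependent ℂ γ ∧
    Submodule.span ℂ (Set.range γ) = (⊤ : Submodule ℂ (EuclideanSpace ℂ (Fin 2 × Fin 2))) := by
  have li : LinearIndependent ℂ γ := by
    rw [Fintype.linearIndependent_iff]
    intro g h
    have key : ∀ p : Fin 2 × Fin 2,
        g 0 * γ 0 p + g 1 * γ 1 p + g 2 * γ 2 p + g 3 * γ 3 p = 0 := by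
      intro p
      have hc := congrArg (fun v : EuclideanSpace ℂ (Fin 2 × Fin 2) => v p) h
      simpa [Fin.sum_univ_four, add_assoc] using hc
    have e00 := key (0,0)
    have e01 := key (0,1)
    have e10 := key (1,0)
    have e11 := key (1,1)
    simp only [γ, tp, s, sperp, mk2, WithLp.equiv_symm_apply, PiLp.toLp_apply, Matrix.cons_val_zero,
      Matrix.cons_val_one, Matrix.cons_val_two, Matrix.cons_val_three, Matrix.head_cons,
      Matrix.tail_cons, hζ0, hζ2, hζm1, hζm2] at e00 e01 e10 e11
    -- products of conjugate phases
    have hm1 : ζ 1 * ζ 1 ^ 2 = 1 := by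
      have h := hζadd 1 (-1)
      rw [show (1 + -1 : ℤ) = 0 by ring, hζ0, hζm1] at h
      exact h.symm
    -- main linear system
    have hS : g 1 + g 2 + g 3 = 0 := by
      have h0 : r3 ^ 2 * r2 ^ 2 * (g 1 + g 2 + g 3) = 0 := by
        linear_combination e10 - (r3 ^ 2 * r2 ^ 2 * g 2) * hm1 - (r3 ^ 2 * r2 ^ 2 * g 3) * hm1
      have hne : r3 ^ 2 * r2 ^ 2 ≠ 0 := by
        exact mul_ne_zero (pow_ne_zero 2 r3_ne) (pow_ne_zero 2 r2_ne)
      exact (mul_eq_zero.mp h0).resolve_left hne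
    have hA : g 1 + g 2 * ζ 1 ^ 2 + g 3 * ζ 1 = 0 := by
      have h0 : r3 ^ 2 * r2 * (g 1 + g 2 * ζ 1 ^ 2 + g 3 * ζ 1) = 0 := by
        linear_combination e00
      have hne : r3 ^ 2 * r2 ≠ 0 := mul_ne_zero (pow_ne_zero 2 r3_ne) r2_ne
      exact (mul_eq_zero.mp h0).resolve_left hne
    have hB : g 1 + g 2 * ζ 1 + g 3 * ζ 1 ^ 2 = 0 := by
      have h0 : r3 ^ 2 * r2 * (g 1 + g 2 * ζ 1 + g 3 * ζ 1 ^ 2) = 0 := by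
        linear_combination -e11
      have hne : r3 ^ 2 * r2 ≠ 0 := mul_ne_zero (pow_ne_zero 2 r3_ne) r2_ne
      exact (mul_eq_zero.mp h0).resolve_left hne
    have hg0 : g 0 = 0 := by
      linear_combination e01 + r3 ^ 2 * hS
    have h12 : (1 : ℂ) + 2 * ζ 1 ≠ 0 := by
      intro hc
      have habs : (3 / 4 : ℂ) = 0 := by
        linear_combination hsum - (ζ 1 / 2) * hc - (1 / 4) * hc
      norm_num at habs
    have hg23 : g 3 - g 2 = 0 := by
      have h0 : (g 3 - g 2) * (1 + 2 * ζ 1) = 0 := by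
        linear_combination hA - hB + (g 3 - g 2) * hsum
      exact (mul_eq_zero.mp h0).resolve_right h12
    have hg12 : g 1 - g 2 = 0 := by
      linear_combination hA - g 2 * hsum - ζ 1 * hg23
    have hg2 : g 2 = 0 := by
      linear_combination hS / 3 - hg12 / 3 - hg23 / 3
    intro i
    fin_cases i
    · exact hg0
    · show g 1 = 0; linear_combination hg12 + hg2
    · exact hg2
    · show g 3 = 0; linear_combination hg23 + hg2
  refine ⟨li, li.span_eq_top_of_card_eq_finrank ?_⟩
  simp [finrank_euclideanSpace]
end
end

section
/- There exist no vectors α, β ∈ ℂ²⊗ℂ² ≅ ℂ⁴ such that ⟨ξ_{ij}, α ⊗ β⟩ = 0 for every ordered pair (i,j) with i ≠ j and (i,j) ≠ (1,2), while ⟨ξ_{12}, α ⊗ β⟩ ≠ 0. That is, the state ξ_{12} admits no product detecting state across the ℂ⁴ : ℂ⁴ bipartition; hence, by Chefles' criterion, the set S^D_{(2)} is not conclusively distinguishable via LOCC, i.e., the Duan ensemble S^D does not allow 2-CLSM (Theorem 3). -/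
/-!
Statement 14 (Theorem 3): The state ξ_{12} admits no product detecting state across the
ℂ⁴ : ℂ⁴ bipartition; hence the set S^D_{(2)} is not conclusively distinguishable via
LOCC, i.e. the Duan ensemble does not allow 2-CLSM.
-/

noncomputable section
open scoped ComplexInnerProductSpace

/-- `1/√2` in `ℂ`. -/
def c2 : ℂ := ((Real.sqrt 2 : ℂ))⁻¹

/-- Alice's Duan states `|0⟩, |1⟩, |+⟩, |i₊⟩` (indexed by `Fin 4`). -/
def dA : Fin 4 → Qubit :=
  ![mk2 1 0, mk2 0 1, mk2 c2 c2, mk2 c2 (c2 * Complex.I)]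

/-- Bob's Duan states `|0⟩, |1⟩, |+⟩, |i₋⟩` (indexed by `Fin 4`). -/
def dB : Fin 4 → Qubit :=
  ![mk2 1 0, mk2 0 1, mk2 c2 c2, mk2 c2 (-(c2 * Complex.I))]

/-- The 2-CLSM vectors `ξ_{ij} = (d^i_A ⊗ d^j_A) ⊗ (d^i_B ⊗ d^j_B)`, the first `ℂ⁴`
factor being Alice's system and the second Bob's. -/
def ξ (i j : Fin 4) : EuclideanSpace ℂ ((Fin 2 × Fin 2) × (Fin 2 × Fin 2)) :=
  tp (tp (dA i) (dA j)) (tp (dB i) (dB j))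

lemma tp_apply {ι κ : Type} (x : EuclideanSpace ℂ ι) (y : EuclideanSpace ℂ κ)
    (p : ι × κ) : tp x y p = x p.1 * y p.2 := rfl

lemma mk2_0 (a b : ℂ) : mk2 a b 0 = a := rfl
lemma mk2_1 (a b : ℂ) : mk2 a b 1 = b := rfl
lemma dA0 : dA 0 = mk2 1 0 := rfl
lemma dA1 : dA 1 = mk2 0 1 := rfl
lemma dA2 : dA 2 = mk2 c2 c2 := rfl
lemma dA3 : dA 3 = mk2 c2 (c2 * Complex.I) := rfl
lemma dB0 : dB 0 = mk2 1 0 := rfl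
lemma dB1 : dB 1 = mk2 0 1 := rfl
lemma dB2 : dB 2 = mk2 c2 c2 := rfl
lemma dB3 : dB 3 = mk2 c2 (-(c2 * Complex.I)) := rfl

/-- There are no `α, β ∈ ℂ²⊗ℂ² ≅ ℂ⁴` such that `α ⊗ β` is orthogonal to every `ξ_{ij}`
with `i ≠ j`, `(i, j) ≠ (1, 2)` (here `(0, 1)` in `Fin 4` indexing) while having nonzero
overlap with `ξ_{12}`: the state `ξ_{12}` admits no product detecting state. -/
theorem duan_2CLSM_no_product_detecting_state :
    ¬ ∃ α β : EuclideanSpace ℂ (Fin 2 × Fin 2),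
      (∀ i j : Fin 4, i ≠ j → (i, j) ≠ ((0 : Fin 4), (1 : Fin 4)) →
        ⟪ξ i j, tp α β⟫ = 0) ∧
      ⟪ξ 0 1, tp α β⟫ ≠ 0 := by

  rintro ⟨α, β, h, hne⟩
  have h10 := h 1 0 (by decide) (by decide)
  have h02 := h 0 2 (by decide) (by decide)
  have h03 := h 0 3 (by decide) (by decide)
  have h20 := h 2 0 (by decide) (by decide)
  have h30 := h 3 0 (by decide) (by decide)
  simp only [ξ, PiLp.inner_apply, RCLike.inner_apply, tp_apply,
    Fintype.sum_prod_type, Fin.sum_univ_two,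
    dA0, dA1, dA2, dA3, dB0, dB1, dB2, dB3, mk2_0, mk2_1, c2,
    map_mul, map_one, map_zero, map_inv₀, map_neg,
    Complex.conj_ofReal, Complex.conj_I,
    one_mul, zero_mul, mul_zero, mul_one, add_zero, zero_add,
    neg_mul, neg_neg, mul_neg] at h10 h02 h03 h20 h30 hne
  -- abbreviations
  set a := α (0, 0) with ha'
  set b := α (0, 1) with hb'
  set c := α (1, 0) with hc'
  set p := β (0, 0) with hp'
  set q := β (0, 1) with hq'
  set r := β (1, 0) with hr'
  have hb : b ≠ 0 := left_ne_zero_of_mul hne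
  have hq : q ≠ 0 := right_ne_zero_of_mul hne
  have hu : ((Real.sqrt 2 : ℝ) : ℂ)⁻¹ * ((Real.sqrt 2 : ℝ) : ℂ)⁻¹ ≠ 0 := by
    have : (Real.sqrt 2 : ℝ) ≠ 0 := by positivity
    simp [this]
  have hI1 : (1 : ℂ) - Complex.I ≠ 0 := by
    simp [Complex.ext_iff]
  have hI2 : (1 : ℂ) + Complex.I ≠ 0 := by
    simp [Complex.ext_iff]
  have hIb : Complex.I * b ≠ 0 := mul_ne_zero Complex.I_ne_zero hb
  -- factored forms of the orthogonality constraints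
  have H02 : (a + b) * (p + q) = 0 := by
    have F : ((Real.sqrt 2 : ℝ) : ℂ)⁻¹ * ((Real.sqrt 2 : ℝ) : ℂ)⁻¹ *
        ((a + b) * (p + q)) = 0 := by linear_combination h02
    exact (mul_eq_zero.mp F).resolve_left hu
  have H03 : (a - Complex.I * b) * (p + Complex.I * q) = 0 := by
    have F : ((Real.sqrt 2 : ℝ) : ℂ)⁻¹ * ((Real.sqrt 2 : ℝ) : ℂ)⁻¹ *
        ((a - Complex.I * b) * (p + Complex.I * q)) = 0 := by linear_combination h03
    exact (mul_eq_zero.mp F).resolve_left hu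
  have H20 : (a + c) * (p + r) = 0 := by
    have F : ((Real.sqrt 2 : ℝ) : ℂ)⁻¹ * ((Real.sqrt 2 : ℝ) : ℂ)⁻¹ *
        ((a + c) * (p + r)) = 0 := by linear_combination h20
    exact (mul_eq_zero.mp F).resolve_left hu
  have H30 : (a - Complex.I * c) * (p + Complex.I * r) = 0 := by
    have F : ((Real.sqrt 2 : ℝ) : ℂ)⁻¹ * ((Real.sqrt 2 : ℝ) : ℂ)⁻¹ *
        ((a - Complex.I * c) * (p + Complex.I * r)) = 0 := by linear_combination h30
    exact (mul_eq_zero.mp F).resolve_left hu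
  -- case analysis on c * r = 0
  rcases mul_eq_zero.mp h10 with hc0 | hr0
  · -- c = 0
    by_cases ha : a = 0
    · -- a = 0 : use H02, H03
      have hpq : p + q = 0 := by
        have := mul_eq_zero.mp H02
        rcases this with h | h
        · exact absurd (show b = 0 by linear_combination h - ha) hb
        · exact h
      have hpiq : p + Complex.I * q = 0 := by
        rcases mul_eq_zero.mp H03 with h | h
        · exact absurd (show Complex.I * b = 0 by linear_combination ha - h) hIb
        · exact h
      have : q * (1 - Complex.I) = 0 := by linear_combination hpq - hpiq
      exact hq ((mul_eq_zero.mp this).resolve_right hI1)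
    · -- a ≠ 0 : use H20, H30 to get r = 0, p = 0
      have hpr : p + r = 0 := by
        rcases mul_eq_zero.mp H20 with h | h
        · exact absurd (show a = 0 by linear_combination h - hc0) ha
        · exact h
      have hpir : p + Complex.I * r = 0 := by
        rcases mul_eq_zero.mp H30 with h | h
        · exact absurd (show a = 0 by linear_combination h + Complex.I * hc0) ha
        · exact h
      have hr : r = 0 := by
        have : r * (1 - Complex.I) = 0 := by linear_combination hpr - hpir
        exact (mul_eq_zero.mp this).resolve_right hI1
      have hp : p = 0 := by linear_combination hpr - hr
      have hab : a + b = 0 := by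
        rcases mul_eq_zero.mp H02 with h | h
        · exact h
        · exact absurd (show q = 0 by linear_combination h - hp) hq
      have hab' : a - Complex.I * b = 0 := by
        rcases mul_eq_zero.mp H03 with h | h
        · exact h
        · have : Complex.I * q = 0 := by linear_combination h - hp
          exact absurd ((mul_eq_zero.mp this).resolve_left Complex.I_ne_zero) hq
      have : b * (1 + Complex.I) = 0 := by linear_combination hab - hab'
      exact hb ((mul_eq_zero.mp this).resolve_right hI2)
  · -- r = 0
    by_cases hp : p = 0
    · have hab : a + b = 0 := by
        rcases mul_eq_zero.mp H02 with h | h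
        · exact h
        · exact absurd (show q = 0 by linear_combination h - hp) hq
      have hab' : a - Complex.I * b = 0 := by
        rcases mul_eq_zero.mp H03 with h | h
        · exact h
        · have : Complex.I * q = 0 := by linear_combination h - hp
          exact absurd ((mul_eq_zero.mp this).resolve_left Complex.I_ne_zero) hq
      have : b * (1 + Complex.I) = 0 := by linear_combination hab - hab'
      exact hb ((mul_eq_zero.mp this).resolve_right hI2)
    · have hac : a + c = 0 := by
        rcases mul_eq_zero.mp H20 with h | h
        · exact h
        · exact absurd (show p = 0 by linear_combination h - hr0) hp
      have hac' : a - Complex.I * c = 0 := by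
        rcases mul_eq_zero.mp H30 with h | h
        · exact h
        · exact absurd (show p = 0 by linear_combination h - Complex.I * hr0) hp
      have hcc : c = 0 := by
        have : c * (1 + Complex.I) = 0 := by linear_combination hac - hac'
        exact (mul_eq_zero.mp this).resolve_right hI2
      have ha : a = 0 := by linear_combination hac - hcc
      have hpq : p + q = 0 := by
        rcases mul_eq_zero.mp H02 with h | h
        · exact absurd (show b = 0 by linear_combination h - ha) hb
        · exact h
      have hpiq : p + Complex.I * q = 0 := by
        rcases mul_eq_zero.mp H03 with h | h
        · exact absurd (show Complex.I * b = 0 by linear_combination ha - h) hIb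
        · exact h
      have : q * (1 - Complex.I) = 0 := by linear_combination hpq - hpiq
      exact hq ((mul_eq_zero.mp this).resolve_right hI1)
end
end
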